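/- Let 2 ≤ p < ∞ with conjugate q, ω ∈ L^q(ℝᵈ), and g ∈ L^∞(ℝᵈ). Then for all h, v ∈ Lᵖ(ℝᵈ), the function Γ(x) = ∫_{ℝᵈ} ω(x−y) g(y) h(y) v(y) dy belongs to Lᵖ(ℝᵈ) and satisfies ‖Γ‖_p ≤ ‖g‖_∞ ‖ω‖_q ‖h‖_p ‖v‖_p. -/

import Mathlib

open Real Filter MeasureTheory
open scoped ENNReal

lemma young_aux {d : ℕ} (P Q : ℝ) (hP : 2 ≤ P) (hQ : 0 < Q) (hPQ : 1/P + 1/Q = 1)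
    (W H : (Fin d → ℝ) → ℝ≥0∞) (hW : Measurable W) (hH : Measurable H) :
    ∫⁻ x, (∫⁻ y, W (x - y) * H y) ^ P ≤
      (∫⁻ a, W a ^ Q) ^ (P/Q) * (∫⁻ a, H a ^ (P/2)) ^ (2:ℝ) := by
  have hP0 : (0:ℝ) < P := by linarith
  have hiP : (0:ℝ) ≤ 1/P := by positivity
  have he : (0:ℝ) ≤ 1 - 2/P := by
    rw [sub_nonneg, div_le_one hP0]; exact hP
  set IW := ∫⁻ a, W a ^ Q with hIW
  set IH := ∫⁻ a, H a ^ (P/2) with hIH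
  have hWQ : Measurable fun a => W a ^ Q := hW.pow_const Q
  have hHR : Measurable fun a => H a ^ (P/2) := hH.pow_const (P/2)
  have hWsub : Measurable fun z : (Fin d → ℝ) × (Fin d → ℝ) => W (z.1 - z.2) :=
    hW.comp (measurable_fst.sub measurable_snd)
  -- pointwise Hölder in y, for every x
  have key : ∀ x, (∫⁻ y, W (x - y) * H y) ≤
      (∫⁻ y, W (x - y) ^ Q * H y ^ (P/2)) ^ (1/P) * (IW ^ (1 - 2/P) * IH ^ (1/P)) := by
    intro x
    have hmp : MeasurePreserving (fun y => x - y) (volume : Measure (Fin d → ℝ)) volume :=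
      Measure.measurePreserving_sub_left volume x
    have htrans : ∫⁻ y, W (x - y) ^ Q = IW := hmp.lintegral_comp hWQ
    set f : Fin 3 → (Fin d → ℝ) → ℝ≥0∞ :=
      ![fun y => W (x - y) ^ Q * H y ^ (P/2), fun y => W (x - y) ^ Q, fun y => H y ^ (P/2)]
    set e : Fin 3 → ℝ := ![1/P, 1 - 2/P, 1/P]
    have hf : ∀ i ∈ Finset.univ, AEMeasurable (f i) (volume : Measure (Fin d → ℝ)) := by
      intro i _
      fin_cases i
      · exact ((hW.comp (measurable_const.sub measurable_id)).pow_const Q |>.mul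
          (hH.pow_const (P/2))).aemeasurable
      · exact ((hW.comp (measurable_const.sub measurable_id)).pow_const Q).aemeasurable
      · exact (hH.pow_const (P/2)).aemeasurable
    have hsum : ∑ i, e i = 1 := by
      simp only [e, Fin.sum_univ_three, Matrix.cons_val_zero, Matrix.cons_val_one,
        Matrix.head_cons, Matrix.cons_val_two, Matrix.tail_cons]
      field_simp
      ring
    have hpos : ∀ i ∈ Finset.univ, 0 ≤ e i := by
      intro i _
      fin_cases i <;>
        simp only [e, Matrix.cons_val_zero, Matrix.cons_val_one, Matrix.head_cons,
          Matrix.cons_val_two, Matrix.tail_cons]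
      · exact hiP
      · exact he
      · exact hiP
    have holder := ENNReal.lintegral_prod_norm_pow_le Finset.univ hf hsum hpos
    have hrw : ∀ y, W (x - y) * H y = ∏ i, f i y ^ e i := by
      intro y
      have h1 : ∏ i, f i y ^ e i =
          (W (x - y) ^ Q * H y ^ (P/2)) ^ (1/P) * (W (x - y) ^ Q) ^ (1 - 2/P)
            * (H y ^ (P/2)) ^ (1/P) := by
        simp [f, e, Fin.prod_univ_three]
      rw [h1, ENNReal.mul_rpow_of_nonneg _ _ hiP]
      simp only [← ENNReal.rpow_mul]
      have h2 : W (x - y) ^ (Q * (1/P)) * H y ^ (P/2 * (1/P)) * W (x - y) ^ (Q * (1 - 2/P))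
          * H y ^ (P/2 * (1/P))
          = (W (x - y) ^ (Q * (1/P)) * W (x - y) ^ (Q * (1 - 2/P)))
            * (H y ^ (P/2 * (1/P)) * H y ^ (P/2 * (1/P))) := by ring
      rw [h2, ← ENNReal.rpow_add_of_nonneg _ _ (by positivity) (by positivity),
        ← ENNReal.rpow_add_of_nonneg _ _ (by positivity) (by positivity)]
      have hq1 : Q * (1/P) + Q * (1 - 2/P) = 1 := by
        have h3 : 1/Q = 1 - 1/P := by linarith
        have hQ1 : Q * (1 - 1/P) = 1 := by rw [← h3]; field_simp
        calc Q * (1/P) + Q * (1 - 2/P) = Q * (1 - 1/P) := by ring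
          _ = 1 := hQ1
      have hp1 : P/2 * (1/P) + P/2 * (1/P) = 1 := by field_simp; ring
      rw [hq1, hp1, ENNReal.rpow_one, ENNReal.rpow_one]
    calc ∫⁻ y, W (x - y) * H y = ∫⁻ y, ∏ i, f i y ^ e i := lintegral_congr hrw
      _ ≤ ∏ i, (∫⁻ y, f i y) ^ e i := holder
      _ = (∫⁻ y, W (x - y) ^ Q * H y ^ (P/2)) ^ (1/P) * (IW ^ (1 - 2/P) * IH ^ (1/P)) := by
          simp only [f, e, Fin.prod_univ_three, Matrix.cons_val_zero, Matrix.cons_val_one,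
            Matrix.head_cons, Matrix.cons_val_two, Matrix.tail_cons]
          rw [htrans, mul_assoc]
  -- raise to the power P and integrate
  have hKmeas : Measurable fun z : (Fin d → ℝ) × (Fin d → ℝ) =>
      W (z.1 - z.2) ^ Q * H z.2 ^ (P/2) :=
    (hWsub.pow_const Q).mul (hHR.comp measurable_snd)
  have hinner : Measurable fun x => ∫⁻ y, W (x - y) ^ Q * H y ^ (P/2) :=
    hKmeas.lintegral_prod_right'
  have keyP : ∀ x, (∫⁻ y, W (x - y) * H y) ^ P ≤
      (∫⁻ y, W (x - y) ^ Q * H y ^ (P/2)) * (IW ^ (1 - 2/P) * IH ^ (1/P)) ^ P := by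
    intro x
    calc (∫⁻ y, W (x - y) * H y) ^ P
        ≤ ((∫⁻ y, W (x - y) ^ Q * H y ^ (P/2)) ^ (1/P) * (IW ^ (1 - 2/P) * IH ^ (1/P))) ^ P :=
          ENNReal.rpow_le_rpow (key x) hP0.le
      _ = (∫⁻ y, W (x - y) ^ Q * H y ^ (P/2)) * (IW ^ (1 - 2/P) * IH ^ (1/P)) ^ P := by
          rw [ENNReal.mul_rpow_of_nonneg _ _ hP0.le, ← ENNReal.rpow_mul,
            one_div_mul_cancel hP0.ne', ENNReal.rpow_one]
  have tonelli : ∫⁻ x, ∫⁻ y, W (x - y) ^ Q * H y ^ (P/2) = IW * IH := by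
    rw [lintegral_lintegral_swap hKmeas.aemeasurable]
    have inner_eq : ∀ y, (∫⁻ x, W (x - y) ^ Q * H y ^ (P/2)) = IW * H y ^ (P/2) := by
      intro y
      have hWy : Measurable fun x : Fin d → ℝ => W (x - y) ^ Q := by
        have : Measurable fun x : Fin d → ℝ => W (x - y) :=
          hW.comp (measurable_id.sub measurable_const)
        exact this.pow_const Q
      rw [lintegral_mul_const _ hWy]
      rw [show (∫⁻ x, W (x - y) ^ Q) = IW from
        (measurePreserving_sub_right volume y).lintegral_comp hWQ]
    rw [lintegral_congr inner_eq, lintegral_const_mul _ hHR]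
  calc ∫⁻ x, (∫⁻ y, W (x - y) * H y) ^ P
      ≤ ∫⁻ x, (∫⁻ y, W (x - y) ^ Q * H y ^ (P/2)) * (IW ^ (1 - 2/P) * IH ^ (1/P)) ^ P :=
        lintegral_mono keyP
    _ = (IW * IH) * (IW ^ (1 - 2/P) * IH ^ (1/P)) ^ P := by
        rw [lintegral_mul_const _ hinner, tonelli]
    _ = IW ^ (P/Q) * IH ^ (2:ℝ) := by
        rw [ENNReal.mul_rpow_of_nonneg _ _ hP0.le, ← ENNReal.rpow_mul, ← ENNReal.rpow_mul]
        have e1 : (1 - 2/P) * P = P - 2 := by field_simp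
        have e2 : (1/P) * P = 1 := by field_simp
        rw [e1, e2, ENNReal.rpow_one]
        have e3 : P/Q = P - 1 := by
          have h3 : 1/Q = 1 - 1/P := by linarith
          rw [div_eq_mul_one_div, h3, mul_sub, mul_one, mul_one_div, div_self hP0.ne']
        have hIH2 : IH * IH = IH ^ (2:ℝ) := by
          rw [show (2:ℝ) = ((2:ℕ):ℝ) by norm_num, ENNReal.rpow_natCast]; ring
        have hIW2 : IW * IW ^ (P-2) = IW ^ (P/Q) := by
          rw [e3, show P - 1 = 1 + (P-2) by ring,
            ENNReal.rpow_add_of_nonneg _ _ zero_le_one (by linarith : (0:ℝ) ≤ P - 2),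
            ENNReal.rpow_one]
        calc IW * IH * (IW ^ (P-2) * IH) = (IW * IW ^ (P-2)) * (IH * IH) :=
              mul_mul_mul_comm _ _ _ _
          _ = IW ^ (P/Q) * IH ^ (2:ℝ) := by rw [hIW2, hIH2]

/-- For `2 ≤ p < ∞` with conjugate `q`, `ω ∈ L^q(ℝᵈ)` and `g ∈ L^∞(ℝᵈ)`,
the function `Γ(x) = ∫ ω(x-y) g(y) h(y) v(y) dy` belongs to `Lᵖ(ℝᵈ)` for all
`h, v ∈ Lᵖ(ℝᵈ)`, with `‖Γ‖_p ≤ ‖g‖_∞ ‖ω‖_q ‖h‖_p ‖v‖_p`. -/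
theorem stmt10 {d : ℕ} (p q : ℝ≥0∞) (hp2 : 2 ≤ p) (hptop : p ≠ ⊤)
    (hpq : 1 / p + 1 / q = 1)
    (ω g h v : (Fin d → ℝ) → ℝ)
    (hω : MemLp ω q (volume : Measure (Fin d → ℝ)))
    (hg : MemLp g ⊤ (volume : Measure (Fin d → ℝ)))
    (hh : MemLp h p (volume : Measure (Fin d → ℝ)))
    (hv : MemLp v p (volume : Measure (Fin d → ℝ)))
    (Γ : (Fin d → ℝ) → ℝ)
    (hΓ : ∀ x, Γ x = ∫ y, ω (x - y) * g y * h y * v y) :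
    MemLp Γ p (volume : Measure (Fin d → ℝ)) ∧
    eLpNorm Γ p volume ≤
      eLpNorm g ⊤ volume * eLpNorm ω q volume * eLpNorm h p volume * eLpNorm v p volume := by
  -- exponent arithmetic
  have hp0 : p ≠ 0 := (lt_of_lt_of_le two_pos hp2).ne'
  have hq0 : q ≠ 0 := by
    intro hq; rw [hq] at hpq; simp at hpq
  have hqtop : q ≠ ⊤ := by
    intro hq
    rw [hq] at hpq
    simp only [ENNReal.div_top, add_zero, one_div] at hpq
    have : p = 1 := by simpa [ENNReal.inv_eq_one] using hpq
    rw [this] at hp2; norm_num at hp2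
  set P := p.toReal with hP
  set Q := q.toReal with hQ
  have hP2 : 2 ≤ P := by
    have := (ENNReal.toReal_le_toReal (by norm_num) hptop).mpr hp2
    simpa using this
  have hP0 : (0:ℝ) < P := by linarith
  have hQ0 : (0:ℝ) < Q := ENNReal.toReal_pos hq0 hqtop
  have hPQr : 1/P + 1/Q = 1 := by
    have hr := congrArg ENNReal.toReal hpq
    rw [ENNReal.toReal_add (by simp [one_div, hp0]) (by simp [one_div, hq0])] at hr
    simpa [one_div, ENNReal.toReal_inv] using hr
  -- measurable representatives
  set ω' := hω.1.mk ω with hω'def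
  set g' := hg.1.mk g with hg'def
  set h' := hh.1.mk h with hh'def
  set v' := hv.1.mk v with hv'def
  have hω'm : StronglyMeasurable ω' := hω.1.stronglyMeasurable_mk
  have hg'm : StronglyMeasurable g' := hg.1.stronglyMeasurable_mk
  have hh'm : StronglyMeasurable h' := hh.1.stronglyMeasurable_mk
  have hv'm : StronglyMeasurable v' := hv.1.stronglyMeasurable_mk
  have hωe : ω =ᵐ[volume] ω' := hω.1.ae_eq_mk
  have hge : g =ᵐ[volume] g' := hg.1.ae_eq_mk
  have hhe : h =ᵐ[volume] h' := hh.1.ae_eq_mk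
  have hve : v =ᵐ[volume] v' := hv.1.ae_eq_mk
  -- Γ in terms of the measurable representatives, for every x
  have hΓ' : ∀ x, Γ x = ∫ y, ω' (x - y) * g' y * h' y * v' y := by
    intro x
    rw [hΓ x]
    apply integral_congr_ae
    have hmp : MeasurePreserving (fun y => x - y) (volume : Measure (Fin d → ℝ)) volume :=
      Measure.measurePreserving_sub_left volume x
    have hsubeq : (fun y => ω (x - y)) =ᵐ[volume] fun y => ω' (x - y) :=
      hmp.quasiMeasurePreserving.ae_eq hωe
    filter_upwards [hsubeq, hge, hhe, hve] with y e1 e2 e3 e4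
    rw [e1, e2, e3, e4]
  -- measurability of Γ
  have hKm : StronglyMeasurable fun z : (Fin d → ℝ) × (Fin d → ℝ) =>
      ω' (z.1 - z.2) * g' z.2 * h' z.2 * v' z.2 := by
    apply Measurable.stronglyMeasurable
    exact (((hω'm.measurable.comp (measurable_fst.sub measurable_snd)).mul
      (hg'm.measurable.comp measurable_snd)).mul
      (hh'm.measurable.comp measurable_snd)).mul (hv'm.measurable.comp measurable_snd)
  have hΓm : AEStronglyMeasurable Γ (volume : Measure (Fin d → ℝ)) := by
    have : Γ = fun x => ∫ y, ω' (x - y) * g' y * h' y * v' y := funext hΓ'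
    rw [this]
    exact hKm.integral_prod_right'.aestronglyMeasurable
  -- the main pointwise bound
  set W : (Fin d → ℝ) → ℝ≥0∞ := fun a => (‖ω' a‖₊ : ℝ≥0∞) with hWdef
  set H : (Fin d → ℝ) → ℝ≥0∞ := fun a => (‖h' a‖₊ : ℝ≥0∞) * (‖v' a‖₊ : ℝ≥0∞) with hHdef
  have hWm : Measurable W := hω'm.measurable.nnnorm.coe_nnreal_ennreal
  have hHm : Measurable H := hh'm.measurable.nnnorm.coe_nnreal_ennreal.mul hv'm.measurable.nnnorm.coe_nnreal_ennreal
  set C := eLpNorm g ⊤ (volume : Measure (Fin d → ℝ)) with hCdef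
  have hCtop : C ≠ ⊤ := hg.2.ne
  have hgC : ∀ᵐ y ∂(volume : Measure (Fin d → ℝ)), (‖g' y‖₊ : ℝ≥0∞) ≤ C := by
    have h1 : C = eLpNormEssSup g' volume := by
      rw [hCdef, eLpNorm_exponent_top]
      exact eLpNormEssSup_congr_ae hge
    rw [h1]
    exact enorm_ae_le_eLpNormEssSup g' volume
  set φ : (Fin d → ℝ) → ℝ≥0∞ := fun x => ∫⁻ y, W (x - y) * H y with hφdef
  have hpoint : ∀ x, (‖Γ x‖₊ : ℝ≥0∞) ≤ C * φ x := by
    intro x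
    calc (‖Γ x‖₊ : ℝ≥0∞) = ‖∫ y, ω' (x - y) * g' y * h' y * v' y‖₊ := by rw [hΓ' x]
      _ ≤ ∫⁻ y, (‖ω' (x - y) * g' y * h' y * v' y‖₊ : ℝ≥0∞) :=
          enorm_integral_le_lintegral_enorm _
      _ ≤ ∫⁻ y, C * (W (x - y) * H y) := by
          apply lintegral_mono_ae
          filter_upwards [hgC] with y hy
          calc (‖ω' (x - y) * g' y * h' y * v' y‖₊ : ℝ≥0∞)
              = (‖g' y‖₊ : ℝ≥0∞) * (W (x - y) * H y) := by
                simp only [nnnorm_mul, ENNReal.coe_mul, hWdef, hHdef]; ring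
            _ ≤ C * (W (x - y) * H y) := mul_le_mul_left hy _
      _ = C * φ x := lintegral_const_mul' _ _ hCtop
  -- apply Young's inequality
  set IW := ∫⁻ a, W a ^ Q with hIWdef
  set IH := ∫⁻ a, H a ^ (P/2) with hIHdef
  have young := young_aux P Q hP2 hQ0 hPQr W H hWm hHm
  -- bound IH via Cauchy-Schwarz
  set Nh := ∫⁻ a, (‖h' a‖₊ : ℝ≥0∞) ^ P with hNhdef
  set Nv := ∫⁻ a, (‖v' a‖₊ : ℝ≥0∞) ^ P with hNvdef
  have hIH : IH ≤ Nh ^ (1/(2:ℝ)) * Nv ^ (1/(2:ℝ)) := by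
    have h22 : (2:ℝ).HolderConjugate 2 := Real.HolderConjugate.two_two
    have hfm : AEMeasurable (fun a => (‖h' a‖₊ : ℝ≥0∞) ^ (P/2)) (volume : Measure (Fin d → ℝ)) :=
      (hh'm.measurable.nnnorm.coe_nnreal_ennreal.pow_const _).aemeasurable
    have hgm : AEMeasurable (fun a => (‖v' a‖₊ : ℝ≥0∞) ^ (P/2)) (volume : Measure (Fin d → ℝ)) :=
      (hv'm.measurable.nnnorm.coe_nnreal_ennreal.pow_const _).aemeasurable
    have := ENNReal.lintegral_mul_le_Lp_mul_Lq (volume : Measure (Fin d → ℝ)) h22 hfm hgm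
    have hsplit : ∀ a, H a ^ (P/2) =
        (‖h' a‖₊ : ℝ≥0∞) ^ (P/2) * (‖v' a‖₊ : ℝ≥0∞) ^ (P/2) := by
      intro a
      rw [hHdef]
      exact ENNReal.mul_rpow_of_nonneg _ _ (by positivity)
    calc IH = ∫⁻ a, (‖h' a‖₊ : ℝ≥0∞) ^ (P/2) * (‖v' a‖₊ : ℝ≥0∞) ^ (P/2) :=
          lintegral_congr hsplit
      _ ≤ (∫⁻ a, ((‖h' a‖₊ : ℝ≥0∞) ^ (P/2)) ^ (2:ℝ)) ^ (1/(2:ℝ)) *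
          (∫⁻ a, ((‖v' a‖₊ : ℝ≥0∞) ^ (P/2)) ^ (2:ℝ)) ^ (1/(2:ℝ)) := this
      _ = Nh ^ (1/(2:ℝ)) * Nv ^ (1/(2:ℝ)) := by
          simp only [← ENNReal.rpow_mul]
          rw [show P/2 * 2 = P by ring]
  have hIH2 : IH ^ (2:ℝ) ≤ Nh * Nv := by
    calc IH ^ (2:ℝ) ≤ (Nh ^ (1/(2:ℝ)) * Nv ^ (1/(2:ℝ))) ^ (2:ℝ) :=
          ENNReal.rpow_le_rpow hIH (by norm_num)
      _ = Nh * Nv := by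
          rw [ENNReal.mul_rpow_of_nonneg _ _ (by norm_num), ← ENNReal.rpow_mul,
            ← ENNReal.rpow_mul]
          norm_num
  -- combine
  have hmain : ∫⁻ x, (‖Γ x‖₊ : ℝ≥0∞) ^ P ≤ C ^ P * (IW ^ (P/Q) * (Nh * Nv)) := by
    calc ∫⁻ x, (‖Γ x‖₊ : ℝ≥0∞) ^ P
        ≤ ∫⁻ x, (C * φ x) ^ P :=
          lintegral_mono fun x => ENNReal.rpow_le_rpow (hpoint x) hP0.le
      _ = ∫⁻ x, C ^ P * φ x ^ P := by
          apply lintegral_congr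
          intro x
          exact ENNReal.mul_rpow_of_nonneg _ _ hP0.le
      _ = C ^ P * ∫⁻ x, φ x ^ P :=
          lintegral_const_mul' _ _ (ENNReal.rpow_ne_top_of_nonneg hP0.le hCtop)
      _ ≤ C ^ P * (IW ^ (P/Q) * IH ^ (2:ℝ)) := mul_le_mul_right young _
      _ ≤ C ^ P * (IW ^ (P/Q) * (Nh * Nv)) :=
          mul_le_mul_right (mul_le_mul_right hIH2 _) _
  -- eLpNorm identities
  have hΓnorm : eLpNorm Γ p volume = (∫⁻ x, (‖Γ x‖₊ : ℝ≥0∞) ^ P) ^ (1/P) :=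
    eLpNorm_eq_lintegral_rpow_enorm_toReal hp0 hptop
  have hωnorm : eLpNorm ω q volume = IW ^ (1/Q) := by
    rw [eLpNorm_congr_ae hωe, eLpNorm_eq_lintegral_rpow_enorm_toReal hq0 hqtop]; rfl
  have hhnorm : eLpNorm h p volume = Nh ^ (1/P) := by
    rw [eLpNorm_congr_ae hhe, eLpNorm_eq_lintegral_rpow_enorm_toReal hp0 hptop]; rfl
  have hvnorm : eLpNorm v p volume = Nv ^ (1/P) := by
    rw [eLpNorm_congr_ae hve, eLpNorm_eq_lintegral_rpow_enorm_toReal hp0 hptop]; rfl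
  have hbound : eLpNorm Γ p volume ≤
      eLpNorm g ⊤ volume * eLpNorm ω q volume * eLpNorm h p volume * eLpNorm v p volume := by
    rw [hΓnorm, hωnorm, hhnorm, hvnorm, ← hCdef]
    calc (∫⁻ x, (‖Γ x‖₊ : ℝ≥0∞) ^ P) ^ (1/P)
        ≤ (C ^ P * (IW ^ (P/Q) * (Nh * Nv))) ^ (1/P) :=
          ENNReal.rpow_le_rpow hmain (by positivity)
      _ = C * IW ^ (1/Q) * Nh ^ (1/P) * Nv ^ (1/P) := by
          rw [ENNReal.mul_rpow_of_nonneg _ _ (by positivity : (0:ℝ) ≤ 1/P),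
            ENNReal.mul_rpow_of_nonneg _ _ (by positivity : (0:ℝ) ≤ 1/P),
            ENNReal.mul_rpow_of_nonneg _ _ (by positivity : (0:ℝ) ≤ 1/P),
            ← ENNReal.rpow_mul, ← ENNReal.rpow_mul,
            show P * (1/P) = 1 by field_simp,
            show (P/Q) * (1/P) = 1/Q by field_simp,
            ENNReal.rpow_one]
          ring
  refine ⟨⟨hΓm, ?_⟩, hbound⟩
  calc eLpNorm Γ p volume
      ≤ eLpNorm g ⊤ volume * eLpNorm ω q volume * eLpNorm h p volume * eLpNorm v p volume :=
        hbound
    _ < ⊤ := by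
        exact ENNReal.mul_lt_top (ENNReal.mul_lt_top (ENNReal.mul_lt_top hg.2 hω.2) hh.2) hv.2
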